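/- Let A be a CM-order of ℤ-rank n, and let a ∈ A be totally positive, meaning ψ(a) is a positive real number for every ring homomorphism ψ : A → ℂ. Then the following are equivalent: (i) a = 1; (ii) Tr_{A/ℤ}(a) = n; (iii) Tr_{A/ℤ}(a) ≤ n. -/

import Mathlib

open Polynomial Module TensorProduct

/-- Evaluation of the characteristic polynomial of a matrix. -/
private lemma charpoly_eval_aux {n R : Type*} [Fintype n] [DecidableEq n] [CommRing R]
    (M : Matrix n n R) (μ : R) :
    (M.charpoly).eval μ = (μ • (1 : Matrix n n R) - M).det := by
  rw [Matrix.charpoly, ← Polynomial.coe_evalRingHom, RingHom.map_det]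
  congr 1
  ext i j
  rcases eq_or_ne i j with h | h <;>
    simp [Matrix.charmatrix_apply, Matrix.one_apply, Matrix.diagonal_apply, h]

/-- A non-unit of a finite-dimensional `ℂ`-algebra is killed by some character. -/
private lemma exists_char_aux (B : Type*) [CommRing B] [Algebra ℂ B] [Module.Finite ℂ B]
    (u : B) (hu : ¬ IsUnit u) :
    ∃ ψ : B →+* ℂ, ψ u = 0 ∧ ∀ c : ℂ, ψ (algebraMap ℂ B c) = c := by
  obtain ⟨m, hm, hum⟩ := Ideal.exists_le_maximal (Ideal.span {u}) (Ideal.span_singleton_ne_top hu)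
  haveI := hm
  haveI := hm.isPrime
  haveI : Module.Finite ℂ (B ⧸ m) :=
    Module.Finite.of_surjective (Ideal.Quotient.mkₐ ℂ m).toLinearMap
      (Ideal.Quotient.mkₐ_surjective ℂ m)
  haveI : Algebra.IsIntegral ℂ (B ⧸ m) := Algebra.IsIntegral.of_finite ℂ _
  have hbij : Function.Bijective (algebraMap ℂ (B ⧸ m)) :=
    ⟨(algebraMap ℂ (B ⧸ m)).injective,
     IsAlgClosed.algebraMap_bijective_of_isIntegral.2⟩
  let e : ℂ ≃+* (B ⧸ m) := RingEquiv.ofBijective _ hbij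
  refine ⟨(e.symm : (B ⧸ m) →+* ℂ).comp (Ideal.Quotient.mk m), ?_, ?_⟩
  · have h0 : (Ideal.Quotient.mk m) u = 0 :=
      Ideal.Quotient.eq_zero_iff_mem.mpr (hum (Ideal.subset_span rfl))
    simp [h0]
  · intro c
    have h1 : (Ideal.Quotient.mk m) (algebraMap ℂ B c) = algebraMap ℂ (B ⧸ m) c := rfl
    have h2 : e c = algebraMap ℂ (B ⧸ m) c := rfl
    simp [h1, ← h2]

set_option synthInstance.maxHeartbeats 1000000 in
set_option maxHeartbeats 1000000 in
/-- Every complex root of the characteristic polynomial of multiplication by `a`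
is the image of `a` under some ring homomorphism to `ℂ`. -/
private lemma exists_psi_aux (A : Type*) [CommRing A] [Module.Free ℤ A] [Module.Finite ℤ A]
    (a : A) (μ : ℂ)
    (hroot : (((Algebra.lmul ℤ A a : Module.End ℤ A).charpoly).map
        (algebraMap ℤ ℂ)).IsRoot μ) :
    ∃ ψ : A →+* ℂ, ψ a = μ := by
  classical
  let B := ℂ ⊗[ℤ] A
  let g : B →ₗ[ℂ] B := (Algebra.lmul ℤ A a).baseChange ℂ
  have hg : g = (Algebra.lmul ℂ B) ((1:ℂ) ⊗ₜ[ℤ] a) := by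
    apply LinearMap.ext
    intro x
    induction x using TensorProduct.induction_on with
    | zero => simp
    | tmul c y =>
      show (LinearMap.baseChange ℂ ((Algebra.lmul ℤ A) a)) (c ⊗ₜ[ℤ] y)
        = ((1:ℂ) ⊗ₜ[ℤ] a) * (c ⊗ₜ[ℤ] y)
      rw [LinearMap.baseChange_tmul, Algebra.TensorProduct.tmul_mul_tmul, one_mul]
      rfl
    | add x y hx hy => simp only [map_add, hx, hy]
  have hcp : (g : Module.End ℂ B).charpoly
      = ((Algebra.lmul ℤ A a : Module.End ℤ A).charpoly).map (algebraMap ℤ ℂ) :=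
    LinearMap.charpoly_baseChange _ ℂ
  have heval : ((g : Module.End ℂ B).charpoly).eval μ = 0 := by
    rw [hcp]; exact hroot
  -- translate into a determinant
  let b' := Module.Free.chooseBasis ℂ B
  have hdet : LinearMap.det (μ • (LinearMap.id : Module.End ℂ B) - g) = 0 := by
    have h1 : (g : Module.End ℂ B).charpoly
        = (LinearMap.toMatrix b' b' g).charpoly := (LinearMap.charpoly_toMatrix g b').symm
    have h2 : ((LinearMap.toMatrix b' b' g).charpoly).eval μ
        = (μ • (1 : Matrix _ _ ℂ) - LinearMap.toMatrix b' b' g).det :=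
      charpoly_eval_aux _ μ
    have h3 : μ • (1 : Matrix _ _ ℂ) - LinearMap.toMatrix b' b' g
        = LinearMap.toMatrix b' b' (μ • (LinearMap.id : Module.End ℂ B) - g) := by
      rw [map_sub, map_smul, LinearMap.toMatrix_id]
    rw [← LinearMap.det_toMatrix b', ← h3, ← h2, ← h1, heval]
  -- the element `algebraMap μ - 1 ⊗ a` is not a unit
  let u : B := algebraMap ℂ B μ - (1:ℂ) ⊗ₜ[ℤ] a
  have hlu : (Algebra.lmul ℂ B) u = μ • (LinearMap.id : Module.End ℂ B) - g := by
    rw [map_sub, ← hg]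
    congr 1
    rw [AlgHom.commutes, Module.algebraMap_end_eq_smul_id]
  have hu : ¬ IsUnit u := by
    intro h
    have h1 : IsUnit (LinearMap.det ((Algebra.lmul ℂ B) u)) :=
      (h.map (Algebra.lmul ℂ B)).map LinearMap.det
    rw [hlu, hdet] at h1
    exact h1.ne_zero rfl
  obtain ⟨ψB, hψ0, hψc⟩ := exists_char_aux B u hu
  refine ⟨ψB.comp (Algebra.TensorProduct.includeRight (R := ℤ) (A := ℂ) (B := A)).toRingHom, ?_⟩
  have h4 : ψB (algebraMap ℂ B μ) - ψB ((1:ℂ) ⊗ₜ[ℤ] a) = 0 := by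
    rw [← map_sub]; exact hψ0
  have h2 : ψB ((1:ℂ) ⊗ₜ[ℤ] a) = μ := by
    rw [hψc μ] at h4
    exact (sub_eq_zero.mp h4).symm
  simpa using h2


private lemma mprod_pos (r : Multiset ℝ) (h : ∀ x ∈ r, 0 < x) : 0 < r.prod := by
  induction r using Multiset.induction_on with
  | empty => simp
  | cons x t ih =>
    rw [Multiset.prod_cons]
    exact mul_pos (h x (Multiset.mem_cons_self x t))
      (ih fun y hy => h y (Multiset.mem_cons_of_mem hy))

private lemma mlog_prod (r : Multiset ℝ) (h : ∀ x ∈ r, 0 < x) :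
    Real.log r.prod = (r.map Real.log).sum := by
  induction r using Multiset.induction_on with
  | empty => simp
  | cons x t ih =>
    rw [Multiset.prod_cons, Multiset.map_cons, Multiset.sum_cons,
      Real.log_mul (h x (Multiset.mem_cons_self x t)).ne'
        (mprod_pos t fun y hy => h y (Multiset.mem_cons_of_mem hy)).ne',
      ih fun y hy => h y (Multiset.mem_cons_of_mem hy)]

private lemma msub_sum (r : Multiset ℝ) :
    (r.map (fun x => x - 1)).sum = r.sum - r.card := by
  induction r using Multiset.induction_on with
  | empty => simp
  | cons x t ih =>
    rw [Multiset.map_cons, Multiset.sum_cons, Multiset.sum_cons, ih, Multiset.card_cons]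
    push_cast
    ring

private lemma multiset_eq_one_aux (r : Multiset ℝ) (hpos : ∀ x ∈ r, 0 < x)
    (hprod : 1 ≤ r.prod) (hsum : r.sum ≤ (r.card : ℝ)) : ∀ x ∈ r, x = 1 := by
  intro x hx
  by_contra hne
  obtain ⟨t, rfl⟩ := Multiset.exists_cons_of_mem hx
  have hxpos := hpos x (Multiset.mem_cons_self x t)
  have htpos : ∀ y ∈ t, 0 < y := fun y hy => hpos y (Multiset.mem_cons_of_mem hy)
  have h1 : (0:ℝ) ≤ ((x ::ₘ t).map Real.log).sum := by
    rw [← mlog_prod _ hpos]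
    exact Real.log_nonneg hprod
  have h2 : ((x ::ₘ t).map Real.log).sum < ((x ::ₘ t).map (fun x => x - 1)).sum := by
    rw [Multiset.map_cons, Multiset.sum_cons, Multiset.map_cons, Multiset.sum_cons]
    have hstrict : Real.log x < x - 1 := Real.log_lt_sub_one_of_pos hxpos hne
    have hrest : (t.map Real.log).sum ≤ (t.map (fun x => x - 1)).sum :=
      Multiset.sum_map_le_sum_map _ _ fun y hy =>
        Real.log_le_sub_one_of_pos (htpos y hy)
    linarith
  rw [msub_sum] at h2
  have : ((x ::ₘ t).card : ℝ) < (x ::ₘ t).sum := by linarith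
  linarith

set_option maxHeartbeats 1000000 in
set_option synthInstance.maxHeartbeats 1000000 in
/-- For a CM-order `A` of ℤ-rank `n` and a totally positive `a ∈ A`, the
conditions `a = 1`, `Tr(a) = n` and `Tr(a) ≤ n` are equivalent. -/
theorem stmt5 (A : Type*) [CommRing A] [IsReduced A]
    [Module.Free ℤ A] [Module.Finite ℤ A]
    (σ : A ≃+* A)
    (hσ : ∀ (ψ : A →+* ℂ) (x : A), ψ (σ x) = starRingEnd ℂ (ψ x))
    (a : A)
    (hpos : ∀ ψ : A →+* ℂ, (ψ a).im = 0 ∧ 0 < (ψ a).re) :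
    (a = 1 ↔ Algebra.trace ℤ A a = (Module.finrank ℤ A : ℤ)) ∧
    (a = 1 ↔ Algebra.trace ℤ A a ≤ (Module.finrank ℤ A : ℤ)) := by
  classical
  have htr1 : Algebra.trace ℤ A (1:A) = (Module.finrank ℤ A : ℤ) := by
    have h := Algebra.trace_algebraMap (R := ℤ) (S := A) 1
    simpa using h
  have main : Algebra.trace ℤ A a ≤ (Module.finrank ℤ A : ℤ) → a = 1 := by
    intro hle
    rcases subsingleton_or_nontrivial A with hA | hA
    · exact Subsingleton.elim a 1
    set n := Module.finrank ℤ A with hn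
    set b := Module.Free.chooseBasis ℤ A with hb
    set M : Matrix _ _ ℤ := Algebra.leftMulMatrix b a with hM
    have hcard_ι : Fintype.card (Module.Free.ChooseBasisIndex ℤ A) = n :=
      (Module.finrank_eq_card_chooseBasisIndex ℤ A).symm
    have htr : Algebra.trace ℤ A a = M.trace := Algebra.trace_eq_matrix_trace b a
    set Mc : Matrix _ _ ℂ := M.map (Int.castRingHom ℂ) with hMc
    set s := Mc.charpoly.roots with hs
    have hsum : Mc.trace = s.sum := Matrix.trace_eq_sum_roots_charpoly Mc
    have hprodroots : Mc.det = s.prod := Matrix.det_eq_prod_roots_charpoly Mc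
    have hdeg : Mc.charpoly.natDegree = n := by
      rw [Matrix.charpoly_natDegree_eq_dim, hcard_ι]
    have hcard : s.card = n := by
      have hsplit : Mc.charpoly.Splits :=
        IsAlgClosed.splits Mc.charpoly
      rw [hs, ← hdeg]
      exact Polynomial.splits_iff_card_roots.mp hsplit
    -- relate `Mc.charpoly` to the charpoly of `lmul a`
    have hch : Mc.charpoly
        = ((Algebra.lmul ℤ A a : Module.End ℤ A).charpoly).map (algebraMap ℤ ℂ) := by
      rw [hMc, Matrix.charpoly_map]
      congr 1
    -- each root is of the form ψ a, hence positive real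
    have hroots : ∀ μ ∈ s, μ.im = 0 ∧ 0 < μ.re := by
      intro μ hμ
      have hr : (Mc.charpoly).IsRoot μ := Polynomial.isRoot_of_mem_roots hμ
      rw [hch] at hr
      obtain ⟨ψ, hψ⟩ := exists_psi_aux A a μ hr
      rw [← hψ]
      exact hpos ψ
    -- pass to the multiset of real parts
    set r : Multiset ℝ := s.map Complex.re with hr
    have hsr : r.map (Complex.ofReal) = s := by
      rw [hr, Multiset.map_map]
      have : ∀ z ∈ s, (Complex.ofReal ∘ Complex.re) z = id z := by
        intro z hz
        have h := (hroots z hz).1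
        simp only [Function.comp_apply, id_eq]
        exact Complex.ext rfl (by simpa using h.symm)
      rw [Multiset.map_congr rfl this, Multiset.map_id]
    have hrcard : r.card = n := by rw [hr, Multiset.card_map, hcard]
    have hrpos : ∀ x ∈ r, 0 < x := by
      intro x hx
      rw [hr] at hx
      obtain ⟨z, hz, rfl⟩ := Multiset.mem_map.mp hx
      exact (hroots z hz).2
    -- sum of r equals the trace
    have hsum_r : (r.sum : ℂ) = ((M.trace : ℤ) : ℂ) := by
      have h1 : ((r.map (Complex.ofReal)).sum : ℂ) = s.sum := by rw [hsr]
      have h2 : (r.map (Complex.ofReal)).sum = (r.sum : ℂ) :=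
        (Complex.ofRealHom.map_multiset_sum r).symm
      have h3 : ((M.trace : ℤ) : ℂ) = Mc.trace := by
        rw [hMc]
        simp [Matrix.trace, Matrix.diag, Matrix.map_apply]
      rw [← h2, h1, hsum.symm, h3]
    have hsum_r' : r.sum = (M.trace : ℝ) := by
      have := hsum_r
      push_cast at this ⊢
      exact_mod_cast this
    -- product of r equals the determinant
    have hprod_r : (r.prod : ℂ) = ((M.det : ℤ) : ℂ) := by
      have h1 : ((r.map (Complex.ofReal)).prod : ℂ) = s.prod := by rw [hsr]
      have h2 : (r.map (Complex.ofReal)).prod = (r.prod : ℂ) :=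
        (Complex.ofRealHom.map_multiset_prod r).symm
      have h3 : ((M.det : ℤ) : ℂ) = Mc.det := by
        rw [hMc]
        exact (Int.castRingHom ℂ).map_det M
      rw [← h2, h1, hprodroots.symm, h3]
    have hprod_r' : r.prod = (M.det : ℝ) := by
      have := hprod_r
      exact Complex.ofReal_injective (by rw [Complex.ofReal_intCast]; exact this)
    -- the determinant is a positive integer
    have hdetpos : 0 < (M.det : ℝ) := by
      rw [← hprod_r']
      exact mprod_pos r hrpos
    have hdet1 : 1 ≤ M.det := by exact_mod_cast hdetpos
    have hprod1 : 1 ≤ r.prod := by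
      rw [hprod_r']
      exact_mod_cast hdet1
    -- the trace is at most n
    have hsum_le : r.sum ≤ (r.card : ℝ) := by
      rw [hsum_r', hrcard]
      have : M.trace ≤ (n : ℤ) := by rwa [← htr]
      exact_mod_cast this
    -- hence all roots are 1
    have hall1 : ∀ x ∈ r, x = 1 := multiset_eq_one_aux r hrpos hprod1 hsum_le
    have hs1 : s = Multiset.replicate n 1 := by
      rw [← hsr]
      have : ∀ x ∈ r, x = 1 := hall1
      have hr1 : r = Multiset.replicate n 1 :=
        Multiset.eq_replicate.mpr ⟨hrcard, this⟩
      rw [hr1]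
      simp [Multiset.map_replicate]
    -- the characteristic polynomial is (X - 1)^n
    have hcp1 : Mc.charpoly = (X - 1) ^ n := by
      have hmonic : Mc.charpoly.Monic := Mc.charpoly_monic
      have hsplit : Mc.charpoly.Splits :=
        IsAlgClosed.splits Mc.charpoly
      have := hsplit.eq_prod_roots_of_monic hmonic
      rw [this, ← hs, hs1]
      rw [Multiset.map_replicate, Multiset.prod_replicate]
      simp
    have hcpZ : M.charpoly = (X - 1) ^ n := by
      apply Polynomial.map_injective (Int.castRingHom ℂ) Int.cast_injective
      rw [← Matrix.charpoly_map, ← hMc, hcp1]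
      simp [Polynomial.map_pow]
    -- Cayley–Hamilton gives (a - 1)^n = 0
    have hCH : (a - 1) ^ n = 0 := by
      have h0 : aeval M M.charpoly = 0 := Matrix.aeval_self_charpoly M
      have h1 : aeval (Algebra.leftMulMatrix b a) M.charpoly
          = Algebra.leftMulMatrix b (aeval a M.charpoly) :=
        Polynomial.aeval_algHom_apply (Algebra.leftMulMatrix b) a M.charpoly
      rw [← hM] at h1
      have h2 : Algebra.leftMulMatrix b (aeval a M.charpoly) = 0 := by
        rw [← h1, h0]
      have h3 : aeval a M.charpoly = 0 := by
        apply Algebra.leftMulMatrix_injective b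
        rw [h2, map_zero]
      rw [hcpZ] at h3
      simpa using h3
    have : IsNilpotent (a - 1) := ⟨n, hCH⟩
    have := this.eq_zero
    linear_combination this
  exact ⟨⟨fun h => h ▸ htr1, fun h => main h.le⟩, ⟨fun h => h ▸ htr1 ▸ le_rfl, main⟩⟩
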